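/- Let V be a complex inner product space, let I be a finite index set, and for each i ∈ I let a_i, b_i : V → V be linear maps satisfying ⟨a_i v, w⟩ = ⟨v, b_i w⟩ for all v, w ∈ V and a_i(b_i v) − b_i(a_i v) = v for all v ∈ V. Let c_i ∈ ℂ and ω_i > 0 for each i ∈ I. Then for every unit vector ψ ∈ V, Σ_{i∈I} |c_i| · (‖a_i ψ‖ + ‖b_i ψ‖) ≤ 2·√( (Σ_{i∈I} |c_i|²/ω_i) · (Σ_{i∈I} ω_i(‖a_i ψ‖² + 1/2)) ). (With H_{B_i} = ω_i(a_i† a_i + 1/2) this is the bound ‖H_int ψ‖ ≤ Σ_i |c_i|(‖a_i ψ‖+‖a_i† ψ‖) ≤ 2√(⟨H_B⟩_ψ · Σ_i |c_i|²/ω_i) for the spin-boson interaction Hamiltonian, obtained via the Cauchy–Schwarz inequality.) -/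

import Mathlib

/-- **Cauchy–Schwarz bound for the spin-boson interaction (Eqs. (28)-(29)).**
For finitely many modes with annihilation/creation pairs `(a_i, b_i)` satisfying
`⟨a_i v, w⟩ = ⟨v, b_i w⟩` and `[a_i, b_i] = 1`, coupling constants `c_i` and frequencies
`ω_i > 0`, every unit vector `ψ` satisfies
`Σ_i |c_i| (‖a_i ψ‖ + ‖b_i ψ‖) ≤ 2 √((Σ_i |c_i|²/ω_i) (Σ_i ω_i (‖a_i ψ‖² + 1/2)))`. -/
theorem spin_boson_bound {V : Type*} [NormedAddCommGroup V] [InnerProductSpace ℂ V]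
    {ι : Type*} (I : Finset ι)
    (a b : ι → V →ₗ[ℂ] V) (c : ι → ℂ) (ω : ι → ℝ)
    (hω : ∀ i ∈ I, 0 < ω i)
    (hadj : ∀ i ∈ I, ∀ v w : V, (inner ℂ (a i v) w : ℂ) = inner ℂ v (b i w))
    (hccr : ∀ i ∈ I, ∀ v : V, a i (b i v) - b i (a i v) = v)
    (ψ : V) (hψ : ‖ψ‖ = 1) :
    ∑ i ∈ I, ‖c i‖ * (‖a i ψ‖ + ‖b i ψ‖) ≤
      2 * Real.sqrt ((∑ i ∈ I, ‖c i‖ ^ 2 / ω i) *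
        (∑ i ∈ I, ω i * (‖a i ψ‖ ^ 2 + 1 / 2))) := by
  -- Key pointwise identity: ‖b i ψ‖² = ‖a i ψ‖² + 1
  have hb2 : ∀ i ∈ I, ‖b i ψ‖ ^ 2 = ‖a i ψ‖ ^ 2 + 1 := by
    intro i hi
    have h1 : (inner ℂ (a i (b i ψ)) ψ : ℂ) = inner ℂ (b i ψ) (b i ψ) := hadj i hi (b i ψ) ψ
    have h2 : a i (b i ψ) = b i (a i ψ) + ψ := by
      have := hccr i hi ψ; rw [sub_eq_iff_eq_add] at this; rw [this]; abel
    have h3 : (inner ℂ (a i ψ) (a i ψ) : ℂ) = inner ℂ ψ (b i (a i ψ)) := hadj i hi ψ (a i ψ)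
    have h4 : (inner ℂ (b i (a i ψ)) ψ : ℂ) = (‖a i ψ‖ : ℂ) ^ 2 := by
      rw [← inner_conj_symm, ← h3, inner_self_eq_norm_sq_to_K]
      simp
    have h5 : (inner ℂ (b i ψ) (b i ψ) : ℂ) = (‖a i ψ‖ : ℂ) ^ 2 + 1 := by
      rw [← h1, h2, inner_add_left, h4, inner_self_eq_norm_sq_to_K, hψ]
      push_cast; ring
    have h6 := h5
    rw [inner_self_eq_norm_sq_to_K] at h6
    exact_mod_cast RCLike.ofReal_injective (K := ℂ) (by push_cast at h6 ⊢; exact h6)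
  set f : ι → ℝ := fun i => ‖c i‖ / Real.sqrt (ω i) with hf
  set g : ι → ℝ := fun i => Real.sqrt (ω i) * (‖a i ψ‖ + ‖b i ψ‖) with hg
  have hfg : ∀ i ∈ I, ‖c i‖ * (‖a i ψ‖ + ‖b i ψ‖) = f i * g i := by
    intro i hi
    have hs : Real.sqrt (ω i) ≠ 0 := ne_of_gt (Real.sqrt_pos.2 (hω i hi))
    field_simp [hf, hg]
    show _ = ‖c i‖ / Real.sqrt (ω i) * (Real.sqrt (ω i) * (‖a i ψ‖ + ‖b i ψ‖))
    rw [← mul_assoc, div_mul_cancel₀ _ hs]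
  have hCS : (∑ i ∈ I, f i * g i) ^ 2 ≤ (∑ i ∈ I, f i ^ 2) * (∑ i ∈ I, g i ^ 2) :=
    Finset.sum_mul_sq_le_sq_mul_sq I f g
  have hf2 : ∀ i ∈ I, f i ^ 2 = ‖c i‖ ^ 2 / ω i := by
    intro i hi
    rw [hf]
    rw [div_pow, Real.sq_sqrt (hω i hi).le]
  have hg2 : ∀ i ∈ I, g i ^ 2 ≤ 4 * (ω i * (‖a i ψ‖ ^ 2 + 1 / 2)) := by
    intro i hi
    have : g i ^ 2 = ω i * (‖a i ψ‖ + ‖b i ψ‖) ^ 2 := by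
      rw [hg]; rw [mul_pow, Real.sq_sqrt (hω i hi).le]
    rw [this]
    have hab : (‖a i ψ‖ + ‖b i ψ‖) ^ 2 ≤ 2 * (‖a i ψ‖ ^ 2 + ‖b i ψ‖ ^ 2) := by
      nlinarith [sq_nonneg (‖a i ψ‖ - ‖b i ψ‖)]
    have hb := hb2 i hi
    nlinarith [(hω i hi).le]
  have hsum1 : (∑ i ∈ I, f i ^ 2) = ∑ i ∈ I, ‖c i‖ ^ 2 / ω i :=
    Finset.sum_congr rfl hf2
  have hsum2 : (∑ i ∈ I, g i ^ 2) ≤ 4 * ∑ i ∈ I, ω i * (‖a i ψ‖ ^ 2 + 1 / 2) := by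
    rw [Finset.mul_sum]; exact Finset.sum_le_sum hg2
  have hLHS : ∑ i ∈ I, ‖c i‖ * (‖a i ψ‖ + ‖b i ψ‖) = ∑ i ∈ I, f i * g i :=
    Finset.sum_congr rfl hfg
  rw [hLHS]
  have hnn : 0 ≤ ∑ i ∈ I, f i * g i := by
    apply Finset.sum_nonneg; intro i hi
    have := hfg i hi
    rw [← this]
    positivity
  have hf2nn : 0 ≤ ∑ i ∈ I, f i ^ 2 := Finset.sum_nonneg fun i _ => sq_nonneg _
  calc ∑ i ∈ I, f i * g i = Real.sqrt ((∑ i ∈ I, f i * g i) ^ 2) := (Real.sqrt_sq hnn).symm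
    _ ≤ Real.sqrt ((∑ i ∈ I, f i ^ 2) * (∑ i ∈ I, g i ^ 2)) := Real.sqrt_le_sqrt hCS
    _ ≤ Real.sqrt ((∑ i ∈ I, f i ^ 2) * (4 * ∑ i ∈ I, ω i * (‖a i ψ‖ ^ 2 + 1 / 2))) := by
        apply Real.sqrt_le_sqrt
        exact mul_le_mul_of_nonneg_left hsum2 hf2nn
    _ = 2 * Real.sqrt ((∑ i ∈ I, ‖c i‖ ^ 2 / ω i) *
          (∑ i ∈ I, ω i * (‖a i ψ‖ ^ 2 + 1 / 2))) := by
        rw [hsum1]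
        rw [show (∑ i ∈ I, ‖c i‖ ^ 2 / ω i) * (4 * ∑ i ∈ I, ω i * (‖a i ψ‖ ^ 2 + 1 / 2))
            = 4 * ((∑ i ∈ I, ‖c i‖ ^ 2 / ω i) * ∑ i ∈ I, ω i * (‖a i ψ‖ ^ 2 + 1 / 2)) by ring]
        rw [Real.sqrt_mul (by norm_num : (0:ℝ) ≤ 4)]
        rw [show (4:ℝ) = 2^2 by norm_num, Real.sqrt_sq (by norm_num : (0:ℝ) ≤ 2)]
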